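/- For any two permutations σ, τ in S_n whose product στ is an n-cycle, the number of cycles of σ plus the number of cycles of τ is at most n+1. -/
import Mathlib


def IsFullCycle {n : ℕ} (σ : Equiv.Perm (Fin n)) : Prop :=
  σ.IsCycle ∧ σ.support = Finset.univ

/-- The number of cycles of a permutation, counting fixed points. -/
def cycleCount {n : ℕ} (σ : Equiv.Perm (Fin n)) : ℕ :=
  σ.cycleType.card + (Finset.univ.filter fun x => σ x = x).card

namespace Stmt3Aux

open Equiv Equiv.Perm Function

variable {n : ℕ}

/-- The setoid whose classes are the cycles (incl. fixed points) of `π`. -/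
def sc (π : Equiv.Perm (Fin n)) : Setoid (Fin n) :=
  ⟨π.SameCycle, ⟨fun x => Equiv.Perm.SameCycle.refl π x,
    fun h => h.symm, fun h h' => h.trans h'⟩⟩

/-- Number of cycles of `π` counted as same-cycle classes. -/
noncomputable def N (π : Equiv.Perm (Fin n)) : ℕ := Nat.card (Quotient (sc π))

/-- The relation obtained from `SameCycle π` by merging the classes of `a` and `b`. -/
def Rrel (π : Equiv.Perm (Fin n)) (a b : Fin n) : Setoid (Fin n) :=
  ⟨fun u v => π.SameCycle u v ∨ (π.SameCycle u a ∧ π.SameCycle b v) ∨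
      (π.SameCycle u b ∧ π.SameCycle a v), by
    constructor
    · exact fun x => Or.inl (Equiv.Perm.SameCycle.refl π x)
    · rintro x y (h | ⟨h1, h2⟩ | ⟨h1, h2⟩)
      · exact Or.inl h.symm
      · exact Or.inr (Or.inr ⟨h2.symm, h1.symm⟩)
      · exact Or.inr (Or.inl ⟨h2.symm, h1.symm⟩)
    · rintro x y z (h | ⟨h1, h2⟩ | ⟨h1, h2⟩) (h' | ⟨h1', h2'⟩ | ⟨h1', h2'⟩)
      · exact Or.inl (h.trans h')
      · exact Or.inr (Or.inl ⟨h.trans h1', h2'⟩)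
      · exact Or.inr (Or.inr ⟨h.trans h1', h2'⟩)
      · exact Or.inr (Or.inl ⟨h1, h2.trans h'⟩)
      · exact Or.inl (h1.trans (((h2.trans h1').symm).trans h2'))
      · exact Or.inl (h1.trans h2')
      · exact Or.inr (Or.inr ⟨h1, h2.trans h'⟩)
      · exact Or.inl (h1.trans h2')
      · exact Or.inl (h1.trans (((h2.trans h1').symm).trans h2'))⟩

lemma rrel_sc (π : Equiv.Perm (Fin n)) (a b x y : Fin n) (h : π.SameCycle x y) :
    (Rrel π a b).r x y := Or.inl h

/-- One-step: `z` and `(swap a b * π) z` are `Rrel π a b`-related. -/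
lemma rrel_step (π : Equiv.Perm (Fin n)) (a b z : Fin n) :
    (Rrel π a b).r z ((Equiv.swap a b * π) z) := by
  have hz : π.SameCycle z (π z) := ⟨1, by simp⟩
  simp only [Equiv.Perm.mul_apply]
  rcases eq_or_ne (π z) a with h | h
  · refine Or.inr (Or.inl ⟨h ▸ hz, ?_⟩)
    rw [h, Equiv.swap_apply_left]
  · rcases eq_or_ne (π z) b with h' | h'
    · refine Or.inr (Or.inr ⟨h' ▸ hz, ?_⟩)
      rw [h', Equiv.swap_apply_right]
    · rw [Equiv.swap_apply_of_ne_of_ne h h']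
      exact Or.inl hz

/-- `SameCycle (swap a b * π)` is contained in `Rrel π a b`. -/
lemma sameCycle_swap_mul_le (π : Equiv.Perm (Fin n)) (a b : Fin n) {x y : Fin n}
    (h : (Equiv.swap a b * π).SameCycle x y) : (Rrel π a b).r x y := by
  obtain ⟨i, -, rfl⟩ := h.exists_pow_eq'
  clear h
  induction i with
  | zero => simpa using (Rrel π a b).iseqv.refl x
  | succ k ih =>
    have : ((Equiv.swap a b * π) ^ (k + 1)) x
        = (Equiv.swap a b * π) (((Equiv.swap a b * π) ^ k) x) := by
      rw [pow_succ']; rfl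
    rw [this]
    exact (Rrel π a b).iseqv.trans ih (rrel_step π a b _)

lemma nat_card_lt_of_surj {α β : Type*} [Finite α] (f : α → β) (hs : Function.Surjective f)
    (hni : ¬ Function.Injective f) : Nat.card β < Nat.card α := by
  have : Finite β := Finite.of_surjective f hs
  have hf : Fintype α := Fintype.ofFinite α
  have hg : Fintype β := Fintype.ofFinite β
  rw [Nat.card_eq_fintype_card, Nat.card_eq_fintype_card]
  exact Fintype.card_lt_of_surjective_not_injective f hs hni

/-- The induced map on quotients for comparable setoids. -/
def qmap (s t : Setoid (Fin n)) (hst : ∀ x y, s.r x y → t.r x y) :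
    Quotient s → Quotient t :=
  Quotient.lift (fun x => (Quotient.mk t x)) (fun x y h => Quotient.sound (hst x y h))

lemma qmap_surj (s t : Setoid (Fin n)) (hst : ∀ x y, s.r x y → t.r x y) :
    Function.Surjective (qmap s t hst) := by
  intro c
  induction c using Quotient.inductionOn with
  | h x => exact ⟨Quotient.mk s x, rfl⟩

lemma card_quot_le (s t : Setoid (Fin n)) (hst : ∀ x y, s.r x y → t.r x y) :
    Nat.card (Quotient t) ≤ Nat.card (Quotient s) :=
  Nat.card_le_card_of_surjective _ (qmap_surj s t hst)

/-- If `t` merges at most the classes of `b` with something, the class count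
drops by at most one. -/
lemma card_quot_ge (s t : Setoid (Fin n)) (hst : ∀ x y, s.r x y → t.r x y) (b : Fin n)
    (hb : ∀ x y, t.r x y → s.r x y ∨ s.r b y ∨ s.r x b) :
    Nat.card (Quotient s) ≤ Nat.card (Quotient t) + 1 := by
  classical
  set g := qmap s t hst with hg
  have key : ∀ c d : Quotient s, g c = g d → c = d ∨ c = Quotient.mk s b ∨
      d = Quotient.mk s b := by
    intro c d
    induction c using Quotient.inductionOn with
    | h x =>
      induction d using Quotient.inductionOn with
      | h y =>
        intro hxy
        have ht : t.r x y := Quotient.exact hxy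
        rcases hb x y ht with h | h | h
        · exact Or.inl (Quotient.sound h)
        · exact Or.inr (Or.inr (Quotient.sound (s.iseqv.symm h)))
        · exact Or.inr (Or.inl (Quotient.sound h))
  let φ : Quotient s → Quotient t ⊕ Unit := fun c =>
    if c = Quotient.mk s b then Sum.inr () else Sum.inl (g c)
  have hφ : Function.Injective φ := by
    intro c d hcd
    by_cases hc : c = Quotient.mk s b <;> by_cases hd : d = Quotient.mk s b
    · rw [hc, hd]
    · simp only [φ, if_pos hc, if_neg hd] at hcd
      cases hcd
    · simp only [φ, if_neg hc, if_pos hd] at hcd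
      cases hcd
    · simp only [φ, if_neg hc, if_neg hd, Sum.inl.injEq] at hcd
      rcases key c d hcd with h | h | h
      · exact h
      · exact absurd h hc
      · exact absurd h hd
  calc Nat.card (Quotient s) ≤ Nat.card (Quotient t ⊕ Unit) :=
        Nat.card_le_card_of_injective φ hφ
    _ = Nat.card (Quotient t) + 1 := by simp [Nat.card_sum]

/-- Multiplying by a swap on the left decreases the cycle count by at most 1. -/
lemma N_le_N_swap_mul (π : Equiv.Perm (Fin n)) (a b : Fin n) :
    N π ≤ N (Equiv.swap a b * π) + 1 := by
  have h1 : N π ≤ Nat.card (Quotient (Rrel π a b)) + 1 := by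
    apply card_quot_ge (sc π) (Rrel π a b) (fun x y h => Or.inl h) b
    rintro x y (h | ⟨h1, h2⟩ | ⟨h1, h2⟩)
    · exact Or.inl h
    · exact Or.inr (Or.inl h2)
    · exact Or.inr (Or.inr h1)
  have h2 : Nat.card (Quotient (Rrel π a b)) ≤ N (Equiv.swap a b * π) :=
    card_quot_le (sc (Equiv.swap a b * π)) (Rrel π a b)
      (fun x y h => sameCycle_swap_mul_le π a b h)
  omega

/-- Multiplying by a swap on the left increases the cycle count by at most 1. -/
lemma N_swap_mul_le (π : Equiv.Perm (Fin n)) (a b : Fin n) :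
    N (Equiv.swap a b * π) ≤ N π + 1 := by
  have := N_le_N_swap_mul (Equiv.swap a b * π) a b
  rwa [Equiv.swap_mul_self_mul] at this

lemma N_le (π : Equiv.Perm (Fin n)) : N π ≤ n := by
  have : Nat.card (Quotient (sc π)) ≤ Nat.card (Fin n) :=
    Nat.card_le_card_of_surjective _ (Quotient.mk_surjective)
  simpa [N] using this

/-- The special swap `swap x (π x)` strictly increases the cycle count. -/
lemma N_lt_N_special (π : Equiv.Perm (Fin n)) {x : Fin n} (hx : π x ≠ x) :
    N π < N (Equiv.swap x (π x) * π) := by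
  set σ' := Equiv.swap x (π x) * π with hσ'
  have hππ : π = Equiv.swap x (π x) * σ' := by rw [hσ', Equiv.swap_mul_self_mul]
  -- every σ'-same-cycle pair is π-same-cycle
  have hxπx : π.SameCycle x (π x) := ⟨1, by simp⟩
  have hsub : ∀ u v : Fin n, σ'.SameCycle u v → π.SameCycle u v := by
    intro u v h
    rcases sameCycle_swap_mul_le π x (π x) (hσ' ▸ h) with h | ⟨h1, h2⟩ | ⟨h1, h2⟩
    · exact h
    · exact (h1.trans hxπx).trans h2
    · exact (h1.trans hxπx.symm).trans h2
  -- x is a fixed point of σ'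
  have hfix : σ' x = x := by
    rw [hσ', Equiv.Perm.mul_apply, Equiv.swap_apply_right]
  have hsame : ∀ y : Fin n, σ'.SameCycle x y → y = x := by
    rintro y ⟨i, hi⟩
    rw [Equiv.Perm.zpow_apply_eq_self_of_apply_eq_self hfix i] at hi
    exact hi.symm
  -- the setoids `sc π` and `Rrel σ' x (π x)` coincide
  have hset : sc π = Rrel σ' x (π x) := by
    apply Setoid.ext
    intro u v
    constructor
    · intro h
      exact sameCycle_swap_mul_le σ' x (π x) (by rwa [← hππ])
    · rintro (h | ⟨h1, h2⟩ | ⟨h1, h2⟩)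
      · exact hsub u v h
      · exact ((hsub u x h1).trans hxπx).trans (hsub (π x) v h2)
      · exact ((hsub u (π x) h1).trans hxπx.symm).trans (hsub x v h2)
  have hcard : N π = Nat.card (Quotient (Rrel σ' x (π x))) := by
    unfold N; rw [hset]
  rw [hcard]
  -- surjection from σ'-classes to Rrel classes which is not injective
  have hle : ∀ u v : Fin n, (sc σ').r u v → (Rrel σ' x (π x)).r u v := fun u v h => Or.inl h
  apply nat_card_lt_of_surj (qmap _ _ hle) (qmap_surj _ _ hle)
  intro hinj
  have h1 : qmap _ _ hle (Quotient.mk (sc σ') x) = qmap _ _ hle (Quotient.mk (sc σ') (π x)) := by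
    apply Quotient.sound
    exact Or.inr (Or.inl ⟨Equiv.Perm.SameCycle.refl σ' x, Equiv.Perm.SameCycle.refl σ' (π x)⟩)
  have h2 := hinj h1
  have h3 : σ'.SameCycle x (π x) := Quotient.exact h2
  exact hx (hsame (π x) h3)

/-- Key subadditivity: `N τ ≤ N (σ * τ) + (n - N σ)`. -/
lemma N_key : ∀ k (σ τ : Equiv.Perm (Fin n)), σ.support.card = k →
    N τ ≤ N (σ * τ) + (n - N σ) := by
  intro k
  induction k using Nat.strong_induction_on with
  | _ k ih =>
    intro σ τ hk
    rcases eq_or_ne σ 1 with rfl | hσ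
    · simp only [one_mul]
      omega
    · have hex : ∃ x, σ x ≠ x := by
        by_contra hcon
        push_neg at hcon
        exact hσ (Equiv.ext hcon)
      obtain ⟨x, hx⟩ := hex
      set σ' := Equiv.swap x (σ x) * σ with hσ'def
      have hcard : σ'.support.card < k := hk ▸ Equiv.Perm.card_support_swap_mul hx
      have hIH := ih σ'.support.card hcard σ' τ rfl
      have hmul : σ' * τ = Equiv.swap x (σ x) * (σ * τ) := by
        rw [hσ'def, mul_assoc]
      have h2 : N (σ' * τ) ≤ N (σ * τ) + 1 := by
        rw [hmul]; exact N_swap_mul_le (σ * τ) x (σ x)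
      have h3 : N σ + 1 ≤ N σ' := N_lt_N_special σ hx
      have h4 : N σ' ≤ n := N_le σ'
      omega

/-- `N` agrees with `cycleCount`. -/
lemma N_eq_cycleCount (π : Equiv.Perm (Fin n)) : N π = cycleCount π := by
  classical
  -- the bijection from same-cycle classes to (cycle factors ⊕ fixed points)
  let f : Fin n → (↥π.cycleFactorsFinset ⊕ {x : Fin n // π x = x}) := fun z =>
    if h : π z = z then Sum.inr ⟨z, h⟩
    else Sum.inl ⟨π.cycleOf z,
      (Equiv.Perm.cycleOf_mem_cycleFactorsFinset_iff).mpr (Equiv.Perm.mem_support.2 h)⟩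
  have hresp : ∀ z w : Fin n, π.SameCycle z w → f z = f w := by
    intro z w h
    by_cases hz : π z = z
    · obtain ⟨i, hi⟩ := h
      rw [Equiv.Perm.zpow_apply_eq_self_of_apply_eq_self hz i] at hi
      subst hi
      rfl
    · have hw : π w ≠ w := by
        intro hw
        obtain ⟨i, hi⟩ := h.symm
        rw [Equiv.Perm.zpow_apply_eq_self_of_apply_eq_self hw i] at hi
        exact hz (hi ▸ hw)
      simp only [f, dif_neg hz, dif_neg hw, Sum.inl.injEq, Subtype.mk.injEq]
      exact h.cycleOf_eq
  let e : Quotient (sc π) → (↥π.cycleFactorsFinset ⊕ {x : Fin n // π x = x}) :=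
    Quotient.lift f hresp
  have hbij : Function.Bijective e := by
    constructor
    · intro c d
      induction c using Quotient.inductionOn with
      | h z =>
        induction d using Quotient.inductionOn with
        | h w =>
          intro hzw
          apply Quotient.sound
          change π.SameCycle z w
          have hzw' : f z = f w := hzw
          by_cases hz : π z = z <;> by_cases hw : π w = w
          · simp only [f, dif_pos hz, dif_pos hw, Sum.inr.injEq, Subtype.mk.injEq] at hzw'
            exact hzw' ▸ Equiv.Perm.SameCycle.refl π z
          · simp only [f, dif_pos hz, dif_neg hw] at hzw'
            cases hzw'
          · simp only [f, dif_neg hz, dif_pos hw] at hzw'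
            cases hzw'
          · simp only [f, dif_neg hz, dif_neg hw, Sum.inl.injEq, Subtype.mk.injEq] at hzw'
            by_contra hcon
            have h1 : π.cycleOf z w = w := Equiv.Perm.cycleOf_apply_of_not_sameCycle hcon
            rw [hzw', Equiv.Perm.cycleOf_apply_self] at h1
            exact hw h1
    · rintro (⟨c, hc⟩ | ⟨z, hz⟩)
      · have hc' := (Equiv.Perm.mem_cycleFactorsFinset_iff).mp hc
        obtain ⟨z, hz, -⟩ := hc'.1
        have hzs : z ∈ c.support := Equiv.Perm.mem_support.2 hz
        have hπz : π z ≠ z := by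
          rw [← hc'.2 z hzs]; exact hz
        refine ⟨Quotient.mk (sc π) z, ?_⟩
        show f z = _
        simp only [f, dif_neg hπz, Sum.inl.injEq, Subtype.mk.injEq]
        exact (Equiv.Perm.cycle_is_cycleOf hzs hc).symm
      · refine ⟨Quotient.mk (sc π) z, ?_⟩
        show f z = _
        simp only [f, dif_pos hz]
  have hN : N π = Nat.card (↥π.cycleFactorsFinset ⊕ {x : Fin n // π x = x}) :=
    Nat.card_eq_of_bijective e hbij
  rw [hN, Nat.card_sum, Nat.card_eq_finsetCard]
  have h1 : π.cycleFactorsFinset.card = π.cycleType.card := by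
    rw [Equiv.Perm.cycleType_def, Multiset.card_map]
    rfl
  have h2 : Nat.card {x : Fin n // π x = x} = (Finset.univ.filter fun x => π x = x).card := by
    rw [Nat.card_eq_fintype_card, Fintype.card_subtype]
  rw [h1, h2, cycleCount]

end Stmt3Aux

theorem stmt_3 (n : ℕ) (σ τ : Equiv.Perm (Fin n)) (h : IsFullCycle (σ * τ)) :
    cycleCount σ + cycleCount τ ≤ n + 1 := by
  classical
  have hcyc : cycleCount (σ * τ) = 1 := by
    have h1 : (σ * τ).cycleType = {(σ * τ).support.card} := h.1.cycleType
    have h2 : (Finset.univ.filter fun x => (σ * τ) x = x) = ∅ := by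
      ext x
      simp only [Finset.mem_filter, Finset.mem_univ, true_and, Finset.notMem_empty,
        iff_false]
      intro hx
      have : x ∈ (σ * τ).support := h.2 ▸ Finset.mem_univ x
      exact (Equiv.Perm.mem_support.1 this) hx
    rw [cycleCount, h1, h2]
    simp
  have hkey := Stmt3Aux.N_key σ.support.card σ τ rfl
  have hNσ := Stmt3Aux.N_le σ
  rw [Stmt3Aux.N_eq_cycleCount, Stmt3Aux.N_eq_cycleCount, Stmt3Aux.N_eq_cycleCount] at hkey
  rw [Stmt3Aux.N_eq_cycleCount] at hNσ
  rw [hcyc] at hkey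
  omega
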